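/- Let (V,g) be a 2n-dimensional real inner product space with orthogonal complex structures J and K satisfying dim ker(J-K) = 2s. Set W = V_K^{0,1} and V⁰ = V_J^{0,1} in V_ℂ = V ⊗ ℂ. Then V_ℂ decomposes as (W₁ ⊕ W₂) ⊕ (conj(W₁) ⊕ W₂'), where W₁ = V⁰ ∩ W = (ker(J-K) ⊗ ℂ) ∩ V_J^{0,1}, W₂ = (Im(J-K) ⊗ ℂ)^{0,1}_K, W₂' = (Im(J-K) ⊗ ℂ)^{0,1}_J, the subspace conj(W₁) ⊕ W₂' is maximal isotropic, W₁ ⊕ W₂' = V⁰, and g(conj(w₁), w₂) = 0 for all w₁ ∈ W₁, w₂ ∈ W₂. -/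

import Mathlib

open TensorProduct Module

section BC
variable {V W : Type*} [AddCommGroup V] [Module ℝ V] [AddCommGroup W] [Module ℝ W]

lemma bc_range (f : V →ₗ[ℝ] W) :
    (LinearMap.range f).baseChange ℂ = LinearMap.range (f.baseChange ℂ) := by
  apply le_antisymm
  · rw [Submodule.baseChange_eq_span, Submodule.span_le]
    rintro - ⟨-, ⟨v, rfl⟩, rfl⟩
    exact ⟨1 ⊗ₜ v, by simp⟩
  · rintro - ⟨y, rfl⟩
    induction y using TensorProduct.induction_on with
    | zero => simp
    | tmul c v => exact Submodule.tmul_mem_baseChange_of_mem c ⟨v, rfl⟩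
    | add a b ha hb => rw [map_add]; exact Submodule.add_mem _ ha hb

lemma bc_ker (f : V →ₗ[ℝ] W) :
    (LinearMap.ker f).baseChange ℂ = LinearMap.ker (f.baseChange ℂ) := by
  have hex := Module.Flat.lTensor_exact ℂ (LinearMap.exact_subtype_ker_map f)
  ext x
  constructor
  · intro hx
    have : x ∈ LinearMap.range ((LinearMap.ker f).subtype.baseChange ℂ) := by
      rwa [← bc_range, Submodule.range_subtype]
    obtain ⟨y, rfl⟩ := this
    simp only [LinearMap.mem_ker, LinearMap.baseChange_eq_ltensor]
    have := (hex (((LinearMap.ker f).subtype.lTensor ℂ) y)).2 ⟨y, rfl⟩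
    simpa [LinearMap.baseChange_eq_ltensor] using this
  · intro hx
    have : (f.lTensor ℂ) x = 0 := by
      have := (LinearMap.mem_ker).1 hx
      rw [← this]; rfl
    obtain ⟨y, hy⟩ := (hex x).1 this
    rw [← Submodule.range_subtype (LinearMap.ker f), bc_range]
    exact ⟨y, hy⟩

lemma bc_finrank [FiniteDimensional ℝ V] (p : Submodule ℝ V) :
    finrank ℂ (p.baseChange ℂ) = finrank ℝ p := by
  have h1 : p.baseChange ℂ = LinearMap.range (p.subtype.baseChange ℂ) := by
    rw [← bc_range, Submodule.range_subtype]
  have hinj : Function.Injective (p.subtype.baseChange ℂ) := by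
    rw [LinearMap.baseChange_eq_ltensor]
    exact Module.Flat.lTensor_preserves_injective_linearMap _ p.injective_subtype
  rw [h1, LinearMap.finrank_range_of_inj hinj, Module.finrank_baseChange]

lemma bc_mapsTo {f : V →ₗ[ℝ] V} {p : Submodule ℝ V} (h : ∀ v, f v ∈ p) (x : ℂ ⊗[ℝ] V) :
    f.baseChange ℂ x ∈ p.baseChange ℂ := by
  induction x using TensorProduct.induction_on with
  | zero => simp
  | tmul c v => exact Submodule.tmul_mem_baseChange_of_mem c (h v)
  | add a b ha hb => rw [map_add]; exact Submodule.add_mem _ ha hb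

lemma bc_mapsTo' {f : V →ₗ[ℝ] V} {p : Submodule ℝ V} (h : ∀ v ∈ p, f v ∈ p)
    {x : ℂ ⊗[ℝ] V} (hx : x ∈ p.baseChange ℂ) : f.baseChange ℂ x ∈ p.baseChange ℂ := by
  rw [Submodule.baseChange_eq_span] at hx
  induction hx using Submodule.span_induction with
  | mem y hy =>
    obtain ⟨m, hm, rfl⟩ := hy
    rw [TensorProduct.mk_apply, LinearMap.baseChange_tmul]
    exact Submodule.tmul_mem_baseChange_of_mem _ (h m hm)
  | zero => simp
  | add a b _ _ ha hb => rw [map_add]; exact Submodule.add_mem _ ha hb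
  | smul c y _ hy => rw [map_smul]; exact Submodule.smul_mem _ _ hy

lemma bc_eq_self {f : V →ₗ[ℝ] V} {p : Submodule ℝ V} (h : ∀ v ∈ p, f v = v)
    {x : ℂ ⊗[ℝ] V} (hx : x ∈ p.baseChange ℂ) : f.baseChange ℂ x = x := by
  rw [Submodule.baseChange_eq_span] at hx
  induction hx using Submodule.span_induction with
  | mem y hy => obtain ⟨m, hm, rfl⟩ := hy; simp [h m hm]
  | zero => simp
  | add a b _ _ ha hb => rw [map_add, ha, hb]
  | smul c y _ hy => rw [map_smul, hy]

lemma bc_eq_zero {f : V →ₗ[ℝ] V} {p : Submodule ℝ V} (h : ∀ v ∈ p, f v = 0)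
    {x : ℂ ⊗[ℝ] V} (hx : x ∈ p.baseChange ℂ) : f.baseChange ℂ x = 0 := by
  rw [Submodule.baseChange_eq_span] at hx
  induction hx using Submodule.span_induction with
  | mem y hy => obtain ⟨m, hm, rfl⟩ := hy; simp [h m hm]
  | zero => simp
  | add a b _ _ ha hb => rw [map_add, ha, hb, add_zero]
  | smul c y _ hy => rw [map_smul, hy, smul_zero]

end BC

section CONJ
variable {V : Type*} [AddCommGroup V] [Module ℝ V]

/-- Complex conjugation on the complexification. -/
noncomputable def sigmaC (V : Type*) [AddCommGroup V] [Module ℝ V] :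
    (ℂ ⊗[ℝ] V) →ₗ[ℝ] (ℂ ⊗[ℝ] V) :=
  TensorProduct.map Complex.conjAe.toLinearMap (LinearMap.id : V →ₗ[ℝ] V)

lemma sigmaC_tmul (c : ℂ) (v : V) : sigmaC V (c ⊗ₜ v) = (starRingEnd ℂ c) ⊗ₜ v := by
  simp [sigmaC]

lemma sigmaC_sigmaC (x : ℂ ⊗[ℝ] V) : sigmaC V (sigmaC V x) = x := by
  induction x using TensorProduct.induction_on with
  | zero => simp
  | tmul c v => simp [sigmaC_tmul]
  | add a b ha hb => rw [map_add, map_add, ha, hb]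

lemma sigmaC_smul (c : ℂ) (x : ℂ ⊗[ℝ] V) :
    sigmaC V (c • x) = (starRingEnd ℂ c) • sigmaC V x := by
  induction x using TensorProduct.induction_on with
  | zero => simp
  | tmul a v => rw [smul_tmul', sigmaC_tmul, sigmaC_tmul, smul_tmul']; simp
  | add a b ha hb => rw [smul_add, map_add, ha, hb, map_add, smul_add]

lemma sigmaC_baseChange (L : V →ₗ[ℝ] V) (x : ℂ ⊗[ℝ] V) :
    sigmaC V (L.baseChange ℂ x) = L.baseChange ℂ (sigmaC V x) := by
  induction x using TensorProduct.induction_on with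
  | zero => simp
  | tmul c v => simp [sigmaC_tmul]
  | add a b ha hb => simp only [map_add, ha, hb]

lemma sigmaC_mem_bc {p : Submodule ℝ V} {x : ℂ ⊗[ℝ] V} (hx : x ∈ p.baseChange ℂ) :
    sigmaC V x ∈ p.baseChange ℂ := by
  rw [Submodule.baseChange_eq_span] at hx
  induction hx using Submodule.span_induction with
  | mem y hy =>
    obtain ⟨m, hm, rfl⟩ := hy
    rw [TensorProduct.mk_apply, sigmaC_tmul]
    exact Submodule.tmul_mem_baseChange_of_mem _ hm
  | zero => simp
  | add a b _ _ ha hb => rw [map_add]; exact Submodule.add_mem _ ha hb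
  | smul c y _ hy => rw [sigmaC_smul]; exact Submodule.smul_mem _ _ hy

lemma finrank_conj_eq {P Q : Submodule ℂ (ℂ ⊗[ℝ] V)}
    (h : ∀ x, x ∈ P ↔ sigmaC V x ∈ Q) : finrank ℂ P = finrank ℂ Q := by
  have e : ↥P ≃ₗ[ℝ] ↥Q :=
    { toFun := fun x => ⟨sigmaC V x, (h x).1 x.2⟩
      invFun := fun y => ⟨sigmaC V y, (h (sigmaC V y)).2 (by rw [sigmaC_sigmaC]; exact y.2)⟩
      map_add' := fun a b => Subtype.ext (by simp [map_add])
      map_smul' := fun r x => Subtype.ext (by simp)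
      left_inv := fun x => Subtype.ext (sigmaC_sigmaC _)
      right_inv := fun y => Subtype.ext (sigmaC_sigmaC _) }
  have h1 : finrank ℝ P = finrank ℝ Q := e.finrank_eq
  have h2 : finrank ℝ ℂ * finrank ℂ P = finrank ℝ P := Module.finrank_mul_finrank ℝ ℂ P
  have h3 : finrank ℝ ℂ * finrank ℂ Q = finrank ℝ Q := Module.finrank_mul_finrank ℝ ℂ Q
  rw [Complex.finrank_real_complex] at h2 h3
  omega

end CONJ

section EIG
variable {M : Type*} [AddCommGroup M] [Module ℂ M]

lemma mem_eigI {T : Module.End ℂ M} {x : M} :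
    x ∈ LinearMap.ker (T + Complex.I • (LinearMap.id : M →ₗ[ℂ] M)) ↔ T x = -(Complex.I • x) := by
  rw [LinearMap.mem_ker, LinearMap.add_apply, LinearMap.smul_apply, LinearMap.id_apply,
    add_eq_zero_iff_eq_neg]

lemma mem_eigI' {T : Module.End ℂ M} {x : M} :
    x ∈ LinearMap.ker (T - Complex.I • (LinearMap.id : M →ₗ[ℂ] M)) ↔ T x = Complex.I • x := by
  rw [LinearMap.mem_ker, LinearMap.sub_apply, LinearMap.smul_apply, LinearMap.id_apply,
    sub_eq_zero]

lemma eig_disjoint_aux (T : Module.End ℂ M) {x : M}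
    (h1 : T x = -(Complex.I • x)) (h2 : T x = Complex.I • x) : x = 0 := by
  have h3 : Complex.I • x + Complex.I • x = 0 := by
    nth_rewrite 1 [← h2]
    rw [h1, neg_add_cancel]
  have h4 : Complex.I • x = 0 := by
    have := smul_eq_zero (r := (2:ℂ)) (m := Complex.I • x)
    rw [two_smul] at this
    rcases this.mp h3 with h | h
    · exact absurd h two_ne_zero
    · exact h
  rcases smul_eq_zero.mp h4 with h | h
  · exact absurd h Complex.I_ne_zero
  · exact h

lemma eig_split {T : Module.End ℂ M} (hT : ∀ x, T (T x) = -x)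
    {P : Submodule ℂ M} (hP : ∀ x ∈ P, T x ∈ P) :
    P = (P ⊓ LinearMap.ker (T + Complex.I • (LinearMap.id : M →ₗ[ℂ] M))) ⊔
        (P ⊓ LinearMap.ker (T - Complex.I • (LinearMap.id : M →ₗ[ℂ] M))) := by
  apply le_antisymm
  · intro x hx
    have hu : (2⁻¹ : ℂ) • (x + Complex.I • T x) ∈
        P ⊓ LinearMap.ker (T + Complex.I • (LinearMap.id : M →ₗ[ℂ] M)) := by
      rw [Submodule.mem_inf]
      constructor
      · exact Submodule.smul_mem _ _ (Submodule.add_mem _ hx (Submodule.smul_mem _ _ (hP x hx)))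
      · rw [mem_eigI, map_smul, map_add, map_smul, hT]
        match_scalars <;> (ring_nf; try simp [Complex.I_sq]; try ring_nf)
    have hw : (2⁻¹ : ℂ) • (x - Complex.I • T x) ∈
        P ⊓ LinearMap.ker (T - Complex.I • (LinearMap.id : M →ₗ[ℂ] M)) := by
      rw [Submodule.mem_inf]
      constructor
      · exact Submodule.smul_mem _ _ (Submodule.sub_mem _ hx (Submodule.smul_mem _ _ (hP x hx)))
      · rw [mem_eigI', map_smul, map_sub, map_smul, hT]
        match_scalars <;> (ring_nf; try simp [Complex.I_sq]; try ring_nf)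
    have hsum : (2⁻¹ : ℂ) • (x + Complex.I • T x) + (2⁻¹ : ℂ) • (x - Complex.I • T x) = x := by
      module
    rw [← hsum]
    exact Submodule.add_mem _ (Submodule.mem_sup_left hu) (Submodule.mem_sup_right hw)
  · exact sup_le inf_le_left inf_le_left

end EIG

section BFORM
variable {V : Type*} [NormedAddCommGroup V] [InnerProductSpace ℝ V]

lemma bform_apply (v w : V) : innerₗ V v w = @inner ℝ V _ v w := rfl

lemma bformC_tmul (a b : ℂ) (v w : V) :
    (LinearMap.BilinForm.baseChange ℂ (innerₗ V)) (a ⊗ₜ v) (b ⊗ₜ w)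
      = (@inner ℝ V _ v w) • (a * b) := by
  rw [LinearMap.BilinForm.baseChange_tmul, bform_apply]

lemma bformC_orth {p q : Submodule ℝ V} (h : ∀ v ∈ p, ∀ w ∈ q, @inner ℝ V _ v w = 0) :
    ∀ x ∈ p.baseChange ℂ, ∀ y ∈ q.baseChange ℂ,
      (LinearMap.BilinForm.baseChange ℂ (innerₗ V)) x y = 0 := by
  intro x hx
  rw [Submodule.baseChange_eq_span] at hx
  induction hx using Submodule.span_induction with
  | mem x' hx' =>
    obtain ⟨v, hv, rfl⟩ := hx'
    intro y hy
    rw [Submodule.baseChange_eq_span] at hy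
    induction hy using Submodule.span_induction with
    | mem y' hy' =>
      obtain ⟨w, hw, rfl⟩ := hy'
      simp only [TensorProduct.mk_apply]
      rw [bformC_tmul, h v hv w hw, zero_smul]
    | zero => rw [map_zero]
    | add a b _ _ ha hb => rw [map_add, ha, hb, add_zero]
    | smul c a _ ha => rw [map_smul, ha, smul_zero]
  | zero => intro y hy; rw [map_zero, LinearMap.zero_apply]
  | add a b _ _ ha hb => intro y hy; rw [map_add, LinearMap.add_apply, ha y hy, hb y hy, add_zero]
  | smul c a _ ha => intro y hy; rw [map_smul, LinearMap.smul_apply, ha y hy, smul_zero]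

lemma bformC_isometry {L : Module.End ℝ V}
    (hL : ∀ v w : V, @inner ℝ V _ (L v) (L w) = @inner ℝ V _ v w) (x y : ℂ ⊗[ℝ] V) :
    (LinearMap.BilinForm.baseChange ℂ (innerₗ V))
        (L.baseChange ℂ x) (L.baseChange ℂ y)
      = (LinearMap.BilinForm.baseChange ℂ (innerₗ V)) x y := by
  induction x using TensorProduct.induction_on with
  | zero => rw [map_zero, map_zero, LinearMap.zero_apply, LinearMap.zero_apply]
  | tmul a v =>
    induction y using TensorProduct.induction_on with
    | zero => rw [map_zero, map_zero, map_zero]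
    | tmul b w => rw [LinearMap.baseChange_tmul, LinearMap.baseChange_tmul,
        bformC_tmul, bformC_tmul, hL]
    | add y₁ y₂ h₁ h₂ => simp only [map_add]; rw [h₁, h₂]
  | add x₁ x₂ h₁ h₂ => simp only [map_add, LinearMap.add_apply]; rw [h₁, h₂]

end BFORM

set_option maxHeartbeats 2000000 in
theorem maximal_isotropic_splitting
    (V : Type*) [NormedAddCommGroup V] [InnerProductSpace ℝ V] [FiniteDimensional ℝ V]
    (n s : ℕ) (hdim : finrank ℝ V = 2 * n)
    (J K : Module.End ℝ V) (hJ : J * J = -1) (hK : K * K = -1)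
    (hJg : ∀ v w : V, @inner ℝ V _ (J v) (J w) = @inner ℝ V _ v w)
    (hKg : ∀ v w : V, @inner ℝ V _ (K v) (K w) = @inner ℝ V _ v w)
    (hs : finrank ℝ (LinearMap.ker (J - K)) = 2 * s) :
    -- the `(0,1)`-eigenspace of (the base change of) an endomorphism `L`
    let E : Module.End ℝ V → Submodule ℂ (ℂ ⊗[ℝ] V) := fun L =>
      LinearMap.ker (LinearMap.baseChange ℂ L +
        Complex.I • (LinearMap.id : (ℂ ⊗[ℝ] V) →ₗ[ℂ] (ℂ ⊗[ℝ] V)))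
    let conjMap : (ℂ ⊗[ℝ] V) →ₗ[ℝ] (ℂ ⊗[ℝ] V) :=
      TensorProduct.map Complex.conjAe.toLinearMap (LinearMap.id : V →ₗ[ℝ] V)
    let B : LinearMap.BilinForm ℂ (ℂ ⊗[ℝ] V) :=
      LinearMap.BilinForm.baseChange ℂ (innerₗ V)
    let W₁ : Submodule ℂ (ℂ ⊗[ℝ] V) :=
      Submodule.baseChange ℂ (LinearMap.ker (J - K)) ⊓ E J
    let W₂ : Submodule ℂ (ℂ ⊗[ℝ] V) :=
      Submodule.baseChange ℂ (LinearMap.range (J - K)) ⊓ E K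
    let W₂' : Submodule ℂ (ℂ ⊗[ℝ] V) :=
      Submodule.baseChange ℂ (LinearMap.range (J - K)) ⊓ E J
    let conjW₁ : Submodule ℂ (ℂ ⊗[ℝ] V) :=
      Submodule.span ℂ (conjMap '' (W₁ : Set (ℂ ⊗[ℝ] V)))
    -- the four pieces form a direct sum decomposition of `V_ℂ`
    (iSupIndep ![W₁, W₂, conjW₁, W₂'] ∧ W₁ ⊔ W₂ ⊔ conjW₁ ⊔ W₂' = ⊤) ∧
    -- `W₁ ⊕ W₂ = W = V_K^{0,1}` and `W₁ = V⁰ ∩ W`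
    (W₁ ⊔ W₂ = E K ∧ W₁ = E J ⊓ E K) ∧
    -- `W₁ ⊕ W₂' = V⁰ = V_J^{0,1}`
    (W₁ ⊔ W₂' = E J) ∧
    -- `conj W₁ ⊕ W₂'` is maximal isotropic
    (finrank ℂ ↥(conjW₁ ⊔ W₂') = n ∧
      ∀ x ∈ conjW₁ ⊔ W₂', ∀ y ∈ conjW₁ ⊔ W₂', B x y = 0) ∧
    -- `g(conj w₁, w₂) = 0` for all `w₁ ∈ W₁`, `w₂ ∈ W₂`
    (∀ w₁ ∈ W₁, ∀ w₂ ∈ W₂, B (conjMap w₁) w₂ = 0) := by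
  intro E conjMap B W₁ W₂ W₂' conjW₁
  classical
  have hJJ : ∀ v : V, J (J v) = -v := fun v => by
    have := congrArg (fun f : Module.End ℝ V => f v) hJ
    simpa [Module.End.mul_apply] using this
  have hKK : ∀ v : V, K (K v) = -v := fun v => by
    have := congrArg (fun f : Module.End ℝ V => f v) hK
    simpa [Module.End.mul_apply] using this
  have hJadj : ∀ v w : V, @inner ℝ V _ (J v) w = -@inner ℝ V _ v (J w) := fun v w => by
    have h1 := hJg v (J w)
    rw [hJJ w, inner_neg_right] at h1
    linarith
  have hKadj : ∀ v w : V, @inner ℝ V _ (K v) w = -@inner ℝ V _ v (K w) := fun v w => by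
    have h1 := hKg v (K w)
    rw [hKK w, inner_neg_right] at h1
    linarith
  have hAadj : ∀ v w : V, @inner ℝ V _ ((J - K) v) w = -@inner ℝ V _ v ((J - K) w) := by
    intro v w
    simp only [LinearMap.sub_apply, inner_sub_left, inner_sub_right, hJadj, hKadj]
    ring
  have hker_orth : LinearMap.ker (J - K) = (LinearMap.range (J - K))ᗮ := by
    ext v
    rw [Submodule.mem_orthogonal]
    constructor
    · intro hv u hu
      obtain ⟨w, rfl⟩ := hu
      rw [hAadj w v, LinearMap.mem_ker.mp hv, inner_zero_right, neg_zero]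
    · intro h
      rw [LinearMap.mem_ker, ← @inner_self_eq_zero ℝ]
      have h1 : @inner ℝ V _ ((J - K) v) ((J - K) v)
          = -@inner ℝ V _ v ((J - K) ((J - K) v)) := hAadj v ((J - K) v)
      have h2 : @inner ℝ V _ v ((J - K) ((J - K) v))
          = @inner ℝ V _ ((J - K) ((J - K) v)) v := real_inner_comm _ _
      have h3 : @inner ℝ V _ ((J - K) ((J - K) v)) v = 0 := h _ ⟨(J - K) v, rfl⟩
      rw [h1, h2, h3, neg_zero]
  have hrange_orth : LinearMap.range (J - K) = (LinearMap.ker (J - K))ᗮ := by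
    rw [hker_orth, Submodule.orthogonal_orthogonal]
  have hcompl : IsCompl (LinearMap.ker (J - K)) (LinearMap.range (J - K)) := by
    rw [hrange_orth]
    exact Submodule.isCompl_orthogonal_of_hasOrthogonalProjection
  have horthKR : ∀ v ∈ LinearMap.ker (J - K), ∀ w ∈ LinearMap.range (J - K),
      @inner ℝ V _ v w = 0 := by
    intro v hv w hw
    rw [hrange_orth] at hw
    exact (Submodule.mem_orthogonal _ w).mp hw v hv
  have hJK_ker : ∀ v ∈ LinearMap.ker (J - K), J v = K v := fun v hv =>
    sub_eq_zero.mp (by simpa [LinearMap.sub_apply] using LinearMap.mem_ker.mp hv)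
  have hJker : ∀ v ∈ LinearMap.ker (J - K), J v ∈ LinearMap.ker (J - K) := by
    intro v hv
    rw [LinearMap.mem_ker, LinearMap.sub_apply]
    have h2 : K (J v) = -v := by rw [hJK_ker v hv]; exact hKK v
    rw [hJJ v, h2, sub_self]
  have hKker : ∀ v ∈ LinearMap.ker (J - K), K v ∈ LinearMap.ker (J - K) := by
    intro v hv
    rw [LinearMap.mem_ker, LinearMap.sub_apply]
    have h1 : J (K v) = -v := by rw [← hJK_ker v hv]; exact hJJ v
    rw [h1, hKK v, sub_self]
  have hJrange : ∀ v ∈ LinearMap.range (J - K), J v ∈ LinearMap.range (J - K) := by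
    intro v hv
    rw [hrange_orth] at hv ⊢
    rw [Submodule.mem_orthogonal] at hv ⊢
    intro u hu
    have h1 := hJadj u v
    have h0 : @inner ℝ V _ (J u) v = 0 := hv (J u) (hJker u hu)
    linarith
  have hKrange : ∀ v ∈ LinearMap.range (J - K), K v ∈ LinearMap.range (J - K) := by
    intro v hv
    rw [hrange_orth] at hv ⊢
    rw [Submodule.mem_orthogonal] at hv ⊢
    intro u hu
    have h1 := hKadj u v
    have h0 : @inner ℝ V _ (K u) v = 0 := hv (K u) (hKker u hu)
    linarith
  -- the projection onto ker (J-K) along range (J-K)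
  set π : V →ₗ[ℝ] V := (LinearMap.ker (J - K)).subtype ∘ₗ
      ((LinearMap.ker (J - K)).projectionOnto (LinearMap.range (J - K)) hcompl) with hπdef
  have hπ_mem : ∀ v, π v ∈ LinearMap.ker (J - K) := fun v => by
    rw [hπdef]
    exact Submodule.coe_mem _
  have hπ_left : ∀ v ∈ LinearMap.ker (J - K), π v = v := by
    intro v hv
    rw [hπdef]
    simp only [LinearMap.comp_apply, Submodule.subtype_apply]
    rw [show v = ((⟨v, hv⟩ : LinearMap.ker (J - K)) : V) from rfl,
      Submodule.projectionOnto_apply_left hcompl]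
  have hπ_right : ∀ v ∈ LinearMap.range (J - K), π v = 0 := by
    intro v hv
    rw [hπdef]
    simp only [LinearMap.comp_apply, Submodule.subtype_apply]
    rw [Submodule.projectionOnto_apply_of_mem_right hcompl hv, Submodule.coe_zero]
  have hVdecomp : ∀ v : V, ∃ a ∈ LinearMap.ker (J - K), ∃ b ∈ LinearMap.range (J - K),
      a + b = v := by
    intro v
    have hv : v ∈ LinearMap.ker (J - K) ⊔ LinearMap.range (J - K) := by
      rw [hcompl.sup_eq_top]
      exact Submodule.mem_top
    obtain ⟨a, ha, b, hb, hab⟩ := Submodule.mem_sup.mp hv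
    exact ⟨a, ha, b, hb, hab⟩
  have hπJ : ∀ v, π (J v) = J (π v) := by
    intro v
    obtain ⟨a, ha, b, hb, hab⟩ := hVdecomp v
    rw [← hab, map_add, map_add, map_add, hπ_left a ha, hπ_right b hb,
      hπ_left _ (hJker a ha), hπ_right _ (hJrange b hb), add_zero, map_add, map_zero, add_zero]
  have hπK : ∀ v, π (K v) = K (π v) := by
    intro v
    obtain ⟨a, ha, b, hb, hab⟩ := hVdecomp v
    rw [← hab, map_add, map_add, map_add, hπ_left a ha, hπ_right b hb,
      hπ_left _ (hKker a ha), hπ_right _ (hKrange b hb), add_zero, map_add, map_zero, add_zero]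
  -- complexified picture
  have hNker : Submodule.baseChange ℂ (LinearMap.ker (J - K))
      = LinearMap.ker ((J - K).baseChange ℂ) := bc_ker _
  have hJc2 : ∀ x : ℂ ⊗[ℝ] V, (J.baseChange ℂ) ((J.baseChange ℂ) x) = -x := by
    intro x
    have h1 : (J * J).baseChange ℂ = (J.baseChange ℂ) * (J.baseChange ℂ) :=
      LinearMap.baseChange_mul J J
    rw [hJ] at h1
    have h2 := congrArg (fun f : Module.End ℂ (ℂ ⊗[ℝ] V) => f x) h1.symm
    simpa [Module.End.mul_apply, LinearMap.baseChange_neg, LinearMap.baseChange_one] using h2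
  have hKc2 : ∀ x : ℂ ⊗[ℝ] V, (K.baseChange ℂ) ((K.baseChange ℂ) x) = -x := by
    intro x
    have h1 : (K * K).baseChange ℂ = (K.baseChange ℂ) * (K.baseChange ℂ) :=
      LinearMap.baseChange_mul K K
    rw [hK] at h1
    have h2 := congrArg (fun f : Module.End ℂ (ℂ ⊗[ℝ] V) => f x) h1.symm
    simpa [Module.End.mul_apply, LinearMap.baseChange_neg, LinearMap.baseChange_one] using h2
  have hAc : ∀ x : ℂ ⊗[ℝ] V, ((J - K).baseChange ℂ) x
      = (J.baseChange ℂ) x - (K.baseChange ℂ) x := by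
    intro x
    rw [LinearMap.baseChange_sub, LinearMap.sub_apply]
  have hπc_mem : ∀ x : ℂ ⊗[ℝ] V,
      (π.baseChange ℂ) x ∈ Submodule.baseChange ℂ (LinearMap.ker (J - K)) := bc_mapsTo hπ_mem
  have hπc_id : ∀ x ∈ Submodule.baseChange ℂ (LinearMap.ker (J - K)),
      (π.baseChange ℂ) x = x := fun x hx => bc_eq_self hπ_left hx
  have hπc_zero : ∀ x ∈ Submodule.baseChange ℂ (LinearMap.range (J - K)),
      (π.baseChange ℂ) x = 0 := fun x hx => bc_eq_zero hπ_right hx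
  have hπc_decomp : ∀ x : ℂ ⊗[ℝ] V,
      x - (π.baseChange ℂ) x ∈ Submodule.baseChange ℂ (LinearMap.range (J - K)) := by
    intro x
    have h1 : ∀ v, ((LinearMap.id : V →ₗ[ℝ] V) - π) v ∈ LinearMap.range (J - K) := by
      intro v
      have h2 : v - π v ∈ LinearMap.range (J - K) := by
        obtain ⟨a, ha, b, hb, hab⟩ := hVdecomp v
        rw [← hab, map_add, hπ_left a ha, hπ_right b hb, add_zero, add_sub_cancel_left]
        exact hb
      simpa using h2
    have h3 := bc_mapsTo h1 x
    rwa [LinearMap.baseChange_sub, LinearMap.sub_apply, LinearMap.baseChange_id,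
      LinearMap.id_apply] at h3
  have hπcJc : ∀ x : ℂ ⊗[ℝ] V, (π.baseChange ℂ) ((J.baseChange ℂ) x)
      = (J.baseChange ℂ) ((π.baseChange ℂ) x) := by
    have hcomp : π ∘ₗ J = J ∘ₗ π := LinearMap.ext hπJ
    have e1 : (π ∘ₗ J).baseChange ℂ = (π.baseChange ℂ) ∘ₗ (J.baseChange ℂ) :=
      LinearMap.baseChange_comp (f := J) π
    have e2 : (J ∘ₗ π).baseChange ℂ = (J.baseChange ℂ) ∘ₗ (π.baseChange ℂ) :=
      LinearMap.baseChange_comp (f := π) J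
    have h := e1.symm.trans ((congrArg (LinearMap.baseChange ℂ) hcomp).trans e2)
    intro x
    exact congrArg (fun f : (ℂ ⊗[ℝ] V) →ₗ[ℂ] (ℂ ⊗[ℝ] V) => f x) h
  have hπcKc : ∀ x : ℂ ⊗[ℝ] V, (π.baseChange ℂ) ((K.baseChange ℂ) x)
      = (K.baseChange ℂ) ((π.baseChange ℂ) x) := by
    have hcomp : π ∘ₗ K = K ∘ₗ π := LinearMap.ext hπK
    have e1 : (π ∘ₗ K).baseChange ℂ = (π.baseChange ℂ) ∘ₗ (K.baseChange ℂ) :=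
      LinearMap.baseChange_comp (f := K) π
    have e2 : (K ∘ₗ π).baseChange ℂ = (K.baseChange ℂ) ∘ₗ (π.baseChange ℂ) :=
      LinearMap.baseChange_comp (f := π) K
    have h := e1.symm.trans ((congrArg (LinearMap.baseChange ℂ) hcomp).trans e2)
    intro x
    exact congrArg (fun f : (ℂ ⊗[ℝ] V) →ₗ[ℂ] (ℂ ⊗[ℝ] V) => f x) h
  have hdisjNR : ∀ x : ℂ ⊗[ℝ] V, x ∈ Submodule.baseChange ℂ (LinearMap.ker (J - K)) →
      x ∈ Submodule.baseChange ℂ (LinearMap.range (J - K)) → x = 0 := by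
    intro x h1 h2
    rw [← hπc_id x h1, hπc_zero x h2]
  have hE : ∀ (L : Module.End ℝ V) (x : ℂ ⊗[ℝ] V),
      x ∈ E L ↔ (L.baseChange ℂ) x = -(Complex.I • x) := fun L x => mem_eigI
  have hcm : conjMap = sigmaC V := rfl
  have hJcN : ∀ x ∈ Submodule.baseChange ℂ (LinearMap.ker (J - K)),
      (J.baseChange ℂ) x ∈ Submodule.baseChange ℂ (LinearMap.ker (J - K)) :=
    fun x hx => bc_mapsTo' hJker hx
  have hJcR : ∀ x ∈ Submodule.baseChange ℂ (LinearMap.range (J - K)),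
      (J.baseChange ℂ) x ∈ Submodule.baseChange ℂ (LinearMap.range (J - K)) :=
    fun x hx => bc_mapsTo' hJrange hx
  have hKcR : ∀ x ∈ Submodule.baseChange ℂ (LinearMap.range (J - K)),
      (K.baseChange ℂ) x ∈ Submodule.baseChange ℂ (LinearMap.range (J - K)) :=
    fun x hx => bc_mapsTo' hKrange hx
  set W₃ : Submodule ℂ (ℂ ⊗[ℝ] V) := Submodule.baseChange ℂ (LinearMap.ker (J - K)) ⊓
      LinearMap.ker ((J.baseChange ℂ) -
        Complex.I • (LinearMap.id : (ℂ ⊗[ℝ] V) →ₗ[ℂ] (ℂ ⊗[ℝ] V))) with hW₃def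
  set W₂σ : Submodule ℂ (ℂ ⊗[ℝ] V) := Submodule.baseChange ℂ (LinearMap.range (J - K)) ⊓
      LinearMap.ker ((K.baseChange ℂ) -
        Complex.I • (LinearMap.id : (ℂ ⊗[ℝ] V) →ₗ[ℂ] (ℂ ⊗[ℝ] V))) with hW₂σdef
  set W₂σ' : Submodule ℂ (ℂ ⊗[ℝ] V) := Submodule.baseChange ℂ (LinearMap.range (J - K)) ⊓
      LinearMap.ker ((J.baseChange ℂ) -
        Complex.I • (LinearMap.id : (ℂ ⊗[ℝ] V) →ₗ[ℂ] (ℂ ⊗[ℝ] V))) with hW₂σ'def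
  have hsplitN : Submodule.baseChange ℂ (LinearMap.ker (J - K)) = W₁ ⊔ W₃ :=
    eig_split hJc2 hJcN
  have hsplitRK : Submodule.baseChange ℂ (LinearMap.range (J - K)) = W₂ ⊔ W₂σ :=
    eig_split hKc2 hKcR
  have hsplitRJ : Submodule.baseChange ℂ (LinearMap.range (J - K)) = W₂' ⊔ W₂σ' :=
    eig_split hJc2 hJcR
  -- membership characterizations
  have hmemW₁ : ∀ x : ℂ ⊗[ℝ] V, x ∈ W₁ ↔
      x ∈ Submodule.baseChange ℂ (LinearMap.ker (J - K)) ∧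
        (J.baseChange ℂ) x = -(Complex.I • x) :=
    fun x => Iff.trans Submodule.mem_inf (and_congr Iff.rfl (hE J x))
  have hmemW₂ : ∀ x : ℂ ⊗[ℝ] V, x ∈ W₂ ↔
      x ∈ Submodule.baseChange ℂ (LinearMap.range (J - K)) ∧
        (K.baseChange ℂ) x = -(Complex.I • x) :=
    fun x => Iff.trans Submodule.mem_inf (and_congr Iff.rfl (hE K x))
  have hmemW₂' : ∀ x : ℂ ⊗[ℝ] V, x ∈ W₂' ↔
      x ∈ Submodule.baseChange ℂ (LinearMap.range (J - K)) ∧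
        (J.baseChange ℂ) x = -(Complex.I • x) :=
    fun x => Iff.trans Submodule.mem_inf (and_congr Iff.rfl (hE J x))
  have hmemW₃ : ∀ x : ℂ ⊗[ℝ] V, x ∈ W₃ ↔
      x ∈ Submodule.baseChange ℂ (LinearMap.ker (J - K)) ∧
        (J.baseChange ℂ) x = Complex.I • x :=
    fun x => Iff.trans Submodule.mem_inf (and_congr Iff.rfl mem_eigI')
  have hmemW₂σ : ∀ x : ℂ ⊗[ℝ] V, x ∈ W₂σ ↔
      x ∈ Submodule.baseChange ℂ (LinearMap.range (J - K)) ∧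
        (K.baseChange ℂ) x = Complex.I • x :=
    fun x => Iff.trans Submodule.mem_inf (and_congr Iff.rfl mem_eigI')
  have hmemW₂σ' : ∀ x : ℂ ⊗[ℝ] V, x ∈ W₂σ' ↔
      x ∈ Submodule.baseChange ℂ (LinearMap.range (J - K)) ∧
        (J.baseChange ℂ) x = Complex.I • x :=
    fun x => Iff.trans Submodule.mem_inf (and_congr Iff.rfl mem_eigI')
  -- conjugation swaps eigenvalues
  have hσeig : ∀ (L : Module.End ℝ V) (x : ℂ ⊗[ℝ] V),
      (L.baseChange ℂ) x = -(Complex.I • x) →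
      (L.baseChange ℂ) (sigmaC V x) = Complex.I • sigmaC V x := by
    intro L x hx
    rw [← sigmaC_baseChange, hx, map_neg, sigmaC_smul, Complex.conj_I, neg_smul, neg_neg]
  have hσeig' : ∀ (L : Module.End ℝ V) (x : ℂ ⊗[ℝ] V),
      (L.baseChange ℂ) x = Complex.I • x →
      (L.baseChange ℂ) (sigmaC V x) = -(Complex.I • sigmaC V x) := by
    intro L x hx
    rw [← sigmaC_baseChange, hx, sigmaC_smul, Complex.conj_I, neg_smul]
  -- conjW₁ = W₃
  have hiffW₁W₃ : ∀ x : ℂ ⊗[ℝ] V, x ∈ W₁ ↔ sigmaC V x ∈ W₃ := by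
    intro x
    constructor
    · intro hx
      rcases (hmemW₁ x).mp hx with ⟨h1, h2⟩
      exact (hmemW₃ _).mpr ⟨sigmaC_mem_bc h1, hσeig J x h2⟩
    · intro hx
      rcases (hmemW₃ _).mp hx with ⟨h1, h2⟩
      have h3 : sigmaC V (sigmaC V x) ∈ W₁ :=
        (hmemW₁ _).mpr ⟨sigmaC_mem_bc h1, hσeig' J _ h2⟩
      rwa [sigmaC_sigmaC] at h3
  have hiffW₂ : ∀ x : ℂ ⊗[ℝ] V, x ∈ W₂ ↔ sigmaC V x ∈ W₂σ := by
    intro x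
    constructor
    · intro hx
      rcases (hmemW₂ x).mp hx with ⟨h1, h2⟩
      exact (hmemW₂σ _).mpr ⟨sigmaC_mem_bc h1, hσeig K x h2⟩
    · intro hx
      rcases (hmemW₂σ _).mp hx with ⟨h1, h2⟩
      have h3 : sigmaC V (sigmaC V x) ∈ W₂ :=
        (hmemW₂ _).mpr ⟨sigmaC_mem_bc h1, hσeig' K _ h2⟩
      rwa [sigmaC_sigmaC] at h3
  have hiffW₂' : ∀ x : ℂ ⊗[ℝ] V, x ∈ W₂' ↔ sigmaC V x ∈ W₂σ' := by
    intro x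
    constructor
    · intro hx
      rcases (hmemW₂' x).mp hx with ⟨h1, h2⟩
      exact (hmemW₂σ' _).mpr ⟨sigmaC_mem_bc h1, hσeig J x h2⟩
    · intro hx
      rcases (hmemW₂σ' _).mp hx with ⟨h1, h2⟩
      have h3 : sigmaC V (sigmaC V x) ∈ W₂' :=
        (hmemW₂' _).mpr ⟨sigmaC_mem_bc h1, hσeig' J _ h2⟩
      rwa [sigmaC_sigmaC] at h3
  have hconjW₃ : conjW₁ = W₃ := by
    apply le_antisymm
    · rw [Submodule.span_le]
      rintro - ⟨x, hx, rfl⟩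
      rw [hcm]
      exact (hiffW₁W₃ x).mp hx
    · intro x hx
      have h1 : sigmaC V x ∈ W₁ := by
        rw [hiffW₁W₃, sigmaC_sigmaC]
        exact hx
      have h2 : x ∈ conjMap '' (W₁ : Set (ℂ ⊗[ℝ] V)) :=
        ⟨sigmaC V x, h1, by rw [hcm, sigmaC_sigmaC]⟩
      exact Submodule.subset_span h2
  -- dimensions
  have hfinV : finrank ℂ (ℂ ⊗[ℝ] V) = 2 * n := by
    rw [Module.finrank_baseChange]; exact hdim
  have hfinN : finrank ℂ (Submodule.baseChange ℂ (LinearMap.ker (J - K))) = 2 * s := by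
    rw [bc_finrank]; exact hs
  have hrn : finrank ℝ (LinearMap.range (J - K)) + finrank ℝ (LinearMap.ker (J - K))
      = finrank ℝ V := LinearMap.finrank_range_add_finrank_ker _
  have hsn : s ≤ n := by omega
  have hfinR : finrank ℂ (Submodule.baseChange ℂ (LinearMap.range (J - K)))
      = 2 * n - 2 * s := by
    rw [bc_finrank]; omega
  have hbotW₁W₃ : W₁ ⊓ W₃ = ⊥ := by
    rw [Submodule.eq_bot_iff]
    intro x hx
    rcases Submodule.mem_inf.mp hx with ⟨h1, h3⟩
    exact eig_disjoint_aux (J.baseChange ℂ) ((hmemW₁ x).mp h1).2 ((hmemW₃ x).mp h3).2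
  have hbotW₂W₂σ : W₂ ⊓ W₂σ = ⊥ := by
    rw [Submodule.eq_bot_iff]
    intro x hx
    rcases Submodule.mem_inf.mp hx with ⟨h1, h3⟩
    exact eig_disjoint_aux (K.baseChange ℂ) ((hmemW₂ x).mp h1).2 ((hmemW₂σ x).mp h3).2
  have hbotW₂'W₂σ' : W₂' ⊓ W₂σ' = ⊥ := by
    rw [Submodule.eq_bot_iff]
    intro x hx
    rcases Submodule.mem_inf.mp hx with ⟨h1, h3⟩
    exact eig_disjoint_aux (J.baseChange ℂ) ((hmemW₂' x).mp h1).2 ((hmemW₂σ' x).mp h3).2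
  have hfinW₁W₃ : finrank ℂ W₁ = finrank ℂ W₃ := finrank_conj_eq hiffW₁W₃
  have hfinW₂W₂σ : finrank ℂ W₂ = finrank ℂ W₂σ := finrank_conj_eq hiffW₂
  have hfinW₂'W₂σ' : finrank ℂ W₂' = finrank ℂ W₂σ' := finrank_conj_eq hiffW₂'
  have hsum13 := Submodule.finrank_sup_add_finrank_inf_eq W₁ W₃
  rw [← hsplitN, hbotW₁W₃, finrank_bot, hfinN] at hsum13
  have hfinW₁ : finrank ℂ W₁ = s := by omega
  have hfinW₃ : finrank ℂ W₃ = s := by omega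
  have hsum2 := Submodule.finrank_sup_add_finrank_inf_eq W₂ W₂σ
  rw [← hsplitRK, hbotW₂W₂σ, finrank_bot, hfinR] at hsum2
  have hfinW₂ : finrank ℂ W₂ = n - s := by omega
  have hsum2' := Submodule.finrank_sup_add_finrank_inf_eq W₂' W₂σ'
  rw [← hsplitRJ, hbotW₂'W₂σ', finrank_bot, hfinR] at hsum2'
  have hfinW₂' : finrank ℂ W₂' = n - s := by omega
  -- W₂ ⊔ W₂' = R
  have hbotW₂W₂' : W₂ ⊓ W₂' = ⊥ := by
    rw [Submodule.eq_bot_iff]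
    intro x hx
    rcases Submodule.mem_inf.mp hx with ⟨h1, h2⟩
    rcases (hmemW₂ x).mp h1 with ⟨hR, hKx⟩
    rcases (hmemW₂' x).mp h2 with ⟨-, hJx⟩
    have hA0 : ((J - K).baseChange ℂ) x = 0 := by
      rw [hAc, hJx, hKx, sub_self]
    have hxN : x ∈ Submodule.baseChange ℂ (LinearMap.ker (J - K)) := by
      rw [hNker]; exact hA0
    exact hdisjNR x hxN hR
  have hsupR : W₂ ⊔ W₂' = Submodule.baseChange ℂ (LinearMap.range (J - K)) := by
    apply Submodule.eq_of_le_of_finrank_eq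
    · exact sup_le inf_le_left inf_le_left
    · have := Submodule.finrank_sup_add_finrank_inf_eq W₂ W₂'
      rw [hbotW₂W₂', finrank_bot, hfinW₂, hfinW₂'] at this
      rw [hfinR]
      omega
  -- N ⊔ R = ⊤
  have hNRtop : Submodule.baseChange ℂ (LinearMap.ker (J - K)) ⊔
      Submodule.baseChange ℂ (LinearMap.range (J - K)) = ⊤ := by
    rw [eq_top_iff]
    intro x _
    exact Submodule.mem_sup.mpr ⟨(π.baseChange ℂ) x, hπc_mem x, x - (π.baseChange ℂ) x,
      hπc_decomp x, by abel⟩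
  have hleW₁EK : W₁ ≤ E K := by
    intro x hx
    rcases (hmemW₁ x).mp hx with ⟨h1, h2⟩
    rw [hE K]
    have h0 : ((J - K).baseChange ℂ) x = 0 := by
      rw [← LinearMap.mem_ker, ← hNker]
      exact h1
    have h3 := hAc x
    rw [h0] at h3
    have h4 : (K.baseChange ℂ) x = (J.baseChange ℂ) x := (sub_eq_zero.mp h3.symm).symm
    rw [h4, h2]
  -- W₁ ⊔ W₂ = E K
  have hEKsup : W₁ ⊔ W₂ = E K := by
    apply le_antisymm
    · exact sup_le hleW₁EK inf_le_right
    · intro x hx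
      rw [hE K] at hx
      have haN := hπc_mem x
      have haK : (K.baseChange ℂ) ((π.baseChange ℂ) x) =
          -(Complex.I • (π.baseChange ℂ) x) := by
        rw [← hπcKc, hx, map_neg, map_smul]
      have haA : ((J - K).baseChange ℂ) ((π.baseChange ℂ) x) = 0 := by
        rw [← LinearMap.mem_ker, ← hNker]
        exact haN
      have haJ : (J.baseChange ℂ) ((π.baseChange ℂ) x) =
          -(Complex.I • (π.baseChange ℂ) x) := by
        have h3 := hAc ((π.baseChange ℂ) x)
        rw [haA] at h3
        rw [(sub_eq_zero.mp h3.symm), haK]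
      have ha : (π.baseChange ℂ) x ∈ W₁ := (hmemW₁ _).mpr ⟨haN, haJ⟩
      have hbR := hπc_decomp x
      have hbK : (K.baseChange ℂ) (x - (π.baseChange ℂ) x) =
          -(Complex.I • (x - (π.baseChange ℂ) x)) := by
        rw [map_sub, hx, ← hπcKc, hx, map_neg, map_smul, smul_sub]
        abel
      have hb : x - (π.baseChange ℂ) x ∈ W₂ := (hmemW₂ _).mpr ⟨hbR, hbK⟩
      exact Submodule.mem_sup.mpr ⟨_, ha, _, hb, by abel⟩
  -- W₁ ⊔ W₂' = E J
  have hEJsup : W₁ ⊔ W₂' = E J := by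
    apply le_antisymm
    · exact sup_le inf_le_right inf_le_right
    · intro x hx
      rw [hE J] at hx
      have haN := hπc_mem x
      have haJ : (J.baseChange ℂ) ((π.baseChange ℂ) x) =
          -(Complex.I • (π.baseChange ℂ) x) := by
        rw [← hπcJc, hx, map_neg, map_smul]
      have ha : (π.baseChange ℂ) x ∈ W₁ := (hmemW₁ _).mpr ⟨haN, haJ⟩
      have hbR := hπc_decomp x
      have hbJ : (J.baseChange ℂ) (x - (π.baseChange ℂ) x) =
          -(Complex.I • (x - (π.baseChange ℂ) x)) := by
        rw [map_sub, hx, ← hπcJc, hx, map_neg, map_smul, smul_sub]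
        abel
      have hb : x - (π.baseChange ℂ) x ∈ W₂' := (hmemW₂' _).mpr ⟨hbR, hbJ⟩
      exact Submodule.mem_sup.mpr ⟨_, ha, _, hb, by abel⟩
  -- W₁ = E J ⊓ E K
  have hW₁EJEK : W₁ = E J ⊓ E K := by
    apply le_antisymm
    · exact le_inf inf_le_right hleW₁EK
    · intro x hx
      rcases Submodule.mem_inf.mp hx with ⟨h1, h2⟩
      rw [hE J] at h1
      rw [hE K] at h2
      have hA0 : ((J - K).baseChange ℂ) x = 0 := by
        rw [hAc, h1, h2, sub_self]
      have hxN : x ∈ Submodule.baseChange ℂ (LinearMap.ker (J - K)) := by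
        rw [hNker]
        exact hA0
      exact (hmemW₁ x).mpr ⟨hxN, h1⟩
  -- the four disjointness statements
  have hD0 : Disjoint W₁ (W₂ ⊔ (W₃ ⊔ W₂')) := by
    rw [Submodule.disjoint_def]
    intro x hx hmem
    obtain ⟨a, ha, y, hy, hxy⟩ := Submodule.mem_sup.mp hmem
    obtain ⟨b, hb, c, hc, hyc⟩ := Submodule.mem_sup.mp hy
    have hxb : x - b ∈ Submodule.baseChange ℂ (LinearMap.ker (J - K)) :=
      sub_mem ((hmemW₁ x).mp hx).1 ((hmemW₃ b).mp hb).1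
    have hac : x - b = a + c := by rw [← hxy, ← hyc]; abel
    have hacR : a + c ∈ Submodule.baseChange ℂ (LinearMap.range (J - K)) :=
      add_mem ((hmemW₂ a).mp ha).1 ((hmemW₂' c).mp hc).1
    have h0 : x - b = 0 := hdisjNR _ hxb (hac ▸ hacR)
    have hxbb : x = b := sub_eq_zero.mp h0
    have hx3 : x ∈ W₃ := by rw [hxbb]; exact hb
    exact eig_disjoint_aux (J.baseChange ℂ) ((hmemW₁ x).mp hx).2 ((hmemW₃ x).mp hx3).2
  have hD1 : Disjoint W₂ (W₁ ⊔ (W₃ ⊔ W₂')) := by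
    rw [Submodule.disjoint_def]
    intro x hx hmem
    obtain ⟨a, ha, y, hy, hxy⟩ := Submodule.mem_sup.mp hmem
    obtain ⟨b, hb, c, hc, hyc⟩ := Submodule.mem_sup.mp hy
    have hxc : x - c ∈ Submodule.baseChange ℂ (LinearMap.range (J - K)) :=
      sub_mem ((hmemW₂ x).mp hx).1 ((hmemW₂' c).mp hc).1
    have hac : x - c = a + b := by rw [← hxy, ← hyc]; abel
    have hacN : a + b ∈ Submodule.baseChange ℂ (LinearMap.ker (J - K)) :=
      add_mem ((hmemW₁ a).mp ha).1 ((hmemW₃ b).mp hb).1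
    have h0 : x - c = 0 := hdisjNR _ (hac ▸ hacN) hxc
    have hxcc : x = c := sub_eq_zero.mp h0
    have hx2 : x ∈ W₂ ⊓ W₂' := Submodule.mem_inf.mpr ⟨hx, by rw [hxcc]; exact hc⟩
    rw [hbotW₂W₂'] at hx2
    exact (Submodule.mem_bot ℂ).mp hx2
  have hD2 : Disjoint W₃ (W₁ ⊔ (W₂ ⊔ W₂')) := by
    rw [Submodule.disjoint_def]
    intro x hx hmem
    obtain ⟨a, ha, y, hy, hxy⟩ := Submodule.mem_sup.mp hmem
    obtain ⟨b, hb, c, hc, hyc⟩ := Submodule.mem_sup.mp hy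
    have hxa : x - a ∈ Submodule.baseChange ℂ (LinearMap.ker (J - K)) :=
      sub_mem ((hmemW₃ x).mp hx).1 ((hmemW₁ a).mp ha).1
    have hac : x - a = b + c := by rw [← hxy, ← hyc]; abel
    have hacR : b + c ∈ Submodule.baseChange ℂ (LinearMap.range (J - K)) :=
      add_mem ((hmemW₂ b).mp hb).1 ((hmemW₂' c).mp hc).1
    have h0 : x - a = 0 := hdisjNR _ hxa (hac ▸ hacR)
    have hxaa : x = a := sub_eq_zero.mp h0
    have hx1 : x ∈ W₁ := by rw [hxaa]; exact ha
    exact eig_disjoint_aux (J.baseChange ℂ) ((hmemW₁ x).mp hx1).2 ((hmemW₃ x).mp hx).2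
  have hD3 : Disjoint W₂' (W₁ ⊔ (W₂ ⊔ W₃)) := by
    rw [Submodule.disjoint_def]
    intro x hx hmem
    obtain ⟨a, ha, y, hy, hxy⟩ := Submodule.mem_sup.mp hmem
    obtain ⟨b, hb, c, hc, hyc⟩ := Submodule.mem_sup.mp hy
    have hxb : x - b ∈ Submodule.baseChange ℂ (LinearMap.range (J - K)) :=
      sub_mem ((hmemW₂' x).mp hx).1 ((hmemW₂ b).mp hb).1
    have hac : x - b = a + c := by rw [← hxy, ← hyc]; abel
    have hacN : a + c ∈ Submodule.baseChange ℂ (LinearMap.ker (J - K)) :=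
      add_mem ((hmemW₁ a).mp ha).1 ((hmemW₃ c).mp hc).1
    have h0 : x - b = 0 := hdisjNR _ (hac ▸ hacN) hxb
    have hxbb : x = b := sub_eq_zero.mp h0
    have hx2 : x ∈ W₂ ⊓ W₂' := Submodule.mem_inf.mpr ⟨by rw [hxbb]; exact hb, hx⟩
    rw [hbotW₂W₂'] at hx2
    exact (Submodule.mem_bot ℂ).mp hx2
  -- independence
  have hind : iSupIndep ![W₁, W₂, conjW₁, W₂'] := by
    have hv : ![W₁, W₂, conjW₁, W₂'] = ![W₁, W₂, W₃, W₂'] := by rw [hconjW₃]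
    rw [hv]
    intro i
    fin_cases i
    · refine Disjoint.mono_right ?_ hD0
      apply iSup_le
      intro j
      apply iSup_le
      intro hj
      fin_cases j
      · exact absurd rfl hj
      · exact le_sup_left
      · exact le_sup_of_le_right le_sup_left
      · exact le_sup_of_le_right le_sup_right
    · refine Disjoint.mono_right ?_ hD1
      apply iSup_le
      intro j
      apply iSup_le
      intro hj
      fin_cases j
      · exact le_sup_left
      · exact absurd rfl hj
      · exact le_sup_of_le_right le_sup_left
      · exact le_sup_of_le_right le_sup_right
    · refine Disjoint.mono_right ?_ hD2
      apply iSup_le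
      intro j
      apply iSup_le
      intro hj
      fin_cases j
      · exact le_sup_left
      · exact le_sup_of_le_right le_sup_left
      · exact absurd rfl hj
      · exact le_sup_of_le_right le_sup_right
    · refine Disjoint.mono_right ?_ hD3
      apply iSup_le
      intro j
      apply iSup_le
      intro hj
      fin_cases j
      · exact le_sup_left
      · exact le_sup_of_le_right le_sup_left
      · exact le_sup_of_le_right le_sup_right
      · exact absurd rfl hj
  -- the top decomposition
  have htop : W₁ ⊔ W₂ ⊔ conjW₁ ⊔ W₂' = ⊤ := by
    rw [hconjW₃, sup_assoc, sup_sup_sup_comm, ← hsplitN, hsupR, hNRtop]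
  -- maximal isotropic: dimension
  have hbot32 : W₃ ⊓ W₂' = ⊥ := by
    rw [Submodule.eq_bot_iff]
    intro x hx
    rcases Submodule.mem_inf.mp hx with ⟨h1, h2⟩
    exact hdisjNR x ((hmemW₃ x).mp h1).1 ((hmemW₂' x).mp h2).1
  have hfin32 : finrank ℂ ↥(conjW₁ ⊔ W₂') = n := by
    rw [hconjW₃]
    have := Submodule.finrank_sup_add_finrank_inf_eq W₃ W₂'
    rw [hbot32, finrank_bot, hfinW₃, hfinW₂'] at this
    omega
  -- isotropy
  have horthRK : ∀ v ∈ LinearMap.range (J - K), ∀ w ∈ LinearMap.ker (J - K),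
      @inner ℝ V _ v w = 0 := by
    intro v hv w hw
    rw [real_inner_comm]
    exact horthKR w hw v hv
  have hBiso : ∀ x ∈ conjW₁ ⊔ W₂', ∀ y ∈ conjW₁ ⊔ W₂', B x y = 0 := by
    intro x hx y hy
    rw [hconjW₃] at hx hy
    obtain ⟨x₃, hx3, x₂, hx2, rfl⟩ := Submodule.mem_sup.mp hx
    obtain ⟨y₃, hy3, y₂, hy2, rfl⟩ := Submodule.mem_sup.mp hy
    have hB33 : B x₃ y₃ = 0 := by
      have hiso := bformC_isometry hJg x₃ y₃
      rw [((hmemW₃ _).mp hx3).2, ((hmemW₃ _).mp hy3).2] at hiso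
      simp only [map_smul, LinearMap.smul_apply, smul_smul] at hiso
      have h2 : Complex.I * Complex.I = -1 := Complex.I_mul_I
      rw [h2, neg_one_smul] at hiso
      linear_combination (-(1:ℂ)/2) * hiso
    have hB22 : B x₂ y₂ = 0 := by
      have hiso := bformC_isometry hJg x₂ y₂
      rw [((hmemW₂' _).mp hx2).2, ((hmemW₂' _).mp hy2).2] at hiso
      simp only [map_neg, LinearMap.neg_apply, map_smul, LinearMap.smul_apply, smul_neg,
        neg_neg, smul_smul] at hiso
      have h2 : Complex.I * Complex.I = -1 := Complex.I_mul_I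
      rw [h2, neg_one_smul] at hiso
      linear_combination (-(1:ℂ)/2) * hiso
    have hB32 : B x₃ y₂ = 0 :=
      bformC_orth horthKR x₃ ((hmemW₃ _).mp hx3).1 y₂ ((hmemW₂' _).mp hy2).1
    have hB23 : B x₂ y₃ = 0 :=
      bformC_orth horthRK x₂ ((hmemW₂' _).mp hx2).1 y₃ ((hmemW₃ _).mp hy3).1
    simp only [map_add, LinearMap.add_apply, hB33, hB32, hB23, hB22, add_zero]
  have hlast : ∀ w₁ ∈ W₁, ∀ w₂ ∈ W₂, B (conjMap w₁) w₂ = 0 := by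
    intro w₁ hw₁ w₂ hw₂
    rw [hcm]
    exact bformC_orth horthKR _ (sigmaC_mem_bc ((hmemW₁ _).mp hw₁).1) _
      ((hmemW₂ _).mp hw₂).1
  exact ⟨⟨hind, htop⟩, ⟨hEKsup, hW₁EJEK⟩, hEJsup, ⟨hfin32, hBiso⟩, hlast⟩
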